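/- Let m, n be nonzero integers and p a prime number with v_p(m) > v_p(n), where v_p denotes the p-adic valuation of the absolute value. Let r ∈ ℕ and ε_1, …, ε_r ∈ {-1, 0, 1}; for 0 ≤ i ≤ r set h_i = ε_1 + ⋯ + ε_i (so h_0 = 0), and assume h_i ≥ 0 for all i. Let N_0, N_1, …, N_r be positive integers such that v_p(N_0) > v_p(m) and such that for each 1 ≤ i ≤ r: if ε_i = 0 then N_i = N_{i-1}; if ε_i = 1 then N_{i-1}/gcd(N_{i-1}, |n|) = N_i/gcd(N_i, |m|); and if ε_i = -1 then N_{i-1}/gcd(N_{i-1}, |m|) = N_i/gcd(N_i, |n|). Then for every 0 ≤ i ≤ r one has v_p(N_i) = h_i · (v_p(m) − v_p(n)) + v_p(N_0). -/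
import Mathlib

/-- valuation of `A / gcd A k` -/
lemma val_div_gcd_aux (p : ℕ) (hp : p.Prime) (A k : ℕ) (hA : A ≠ 0) (hk : k ≠ 0) :
    padicValNat p (A / Nat.gcd A k)
      = padicValNat p A - min (padicValNat p A) (padicValNat p k) := by
  have hdvd : Nat.gcd A k ∣ A := Nat.gcd_dvd_left A k
  have h1 := Nat.factorization_div hdvd
  have h2 := Nat.factorization_gcd hA hk
  have e1 : (A / Nat.gcd A k).factorization p
      = A.factorization p - (Nat.gcd A k).factorization p := by
    rw [h1]; rfl
  have e2 : (Nat.gcd A k).factorization p = min (A.factorization p) (k.factorization p) := by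
    rw [h2]; rfl
  rw [← Nat.factorization_def _ hp, e1, e2, Nat.factorization_def _ hp,
    Nat.factorization_def _ hp]

/-- Arithmetic propagation of `p`-adic valuations along the Transfer
Equation of `(m,n)`-graphs: if `v_p(m) > v_p(n)`, the partial sums `h_i` of the step
signs `ε_i` stay nonnegative, and `v_p(N_0) > v_p(m)`, then
`v_p(N_i) = h_i (v_p(m) - v_p(n)) + v_p(N_0)` for all `0 ≤ i ≤ r`.
Here `v_p(k)` is `padicValNat p |k|`. -/
theorem transfer_valuation
    (m n : ℤ) (hm : m ≠ 0) (hn : n ≠ 0) (p : ℕ) (hp : p.Prime)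
    (hval : padicValNat p n.natAbs < padicValNat p m.natAbs)
    (r : ℕ) (ε : ℕ → ℤ)
    (hε : ∀ i, 1 ≤ i → i ≤ r → ε i = -1 ∨ ε i = 0 ∨ ε i = 1)
    (h : ℕ → ℤ) (hh : ∀ i, h i = ∑ j ∈ Finset.Icc 1 i, ε j)
    (hnonneg : ∀ i ≤ r, 0 ≤ h i)
    (N : ℕ → ℕ) (hNpos : ∀ i ≤ r, 0 < N i)
    (hN0 : padicValNat p m.natAbs < padicValNat p (N 0))
    (hstep : ∀ i, 1 ≤ i → i ≤ r →
      (ε i = 0 → N i = N (i - 1)) ∧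
      (ε i = 1 → N (i - 1) / Nat.gcd (N (i - 1)) n.natAbs
               = N i / Nat.gcd (N i) m.natAbs) ∧
      (ε i = -1 → N (i - 1) / Nat.gcd (N (i - 1)) m.natAbs
                = N i / Nat.gcd (N i) n.natAbs)) :
    ∀ i ≤ r, (padicValNat p (N i) : ℤ)
      = h i * ((padicValNat p m.natAbs : ℤ) - (padicValNat p n.natAbs : ℤ))
        + (padicValNat p (N 0) : ℤ) := by
  have hmn : m.natAbs ≠ 0 := fun h' => hm (Int.natAbs_eq_zero.mp h')
  have hnn : n.natAbs ≠ 0 := fun h' => hn (Int.natAbs_eq_zero.mp h')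
  set μ := padicValNat p m.natAbs with hμ
  set ν := padicValNat p n.natAbs with hν
  have h0 : h 0 = 0 := by rw [hh]; simp
  intro i
  induction i with
  | zero => intro _; rw [h0]; ring
  | succ i ih =>
    intro hir
    have hir' : i ≤ r := Nat.le_of_succ_le hir
    have IH := ih hir'
    -- bound from IH: v_p (N i) > μ
    have hHnn := hnonneg i hir'
    have hbig : (μ : ℤ) < (padicValNat p (N i) : ℤ) := by
      rw [IH]
      have : (0:ℤ) ≤ h i * ((μ:ℤ) - ν) := by
        apply mul_nonneg hHnn
        have : (ν:ℤ) < μ := by exact_mod_cast hval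
        linarith
      have : (μ:ℤ) < (padicValNat p (N 0) : ℤ) := by exact_mod_cast hN0
      linarith
    have hbigN : μ < padicValNat p (N i) := by exact_mod_cast hbig
    have hNi : N i ≠ 0 := (hNpos i hir').ne'
    have hNi1 : N (i+1) ≠ 0 := (hNpos (i+1) hir).ne'
    have hsum : h (i+1) = h i + ε (i+1) := by
      rw [hh, hh, Finset.sum_Icc_succ_top (Nat.le_add_left 1 i)]
    obtain ⟨hs0, hs1, hs2⟩ := hstep (i+1) (Nat.le_add_left 1 i) hir
    simp only [Nat.add_sub_cancel] at hs0 hs1 hs2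
    rcases hε (i+1) (Nat.le_add_left 1 i) hir with he | he | he
    · -- ε = -1
      have key := congrArg (padicValNat p) (hs2 he)
      rw [val_div_gcd_aux p hp _ _ hNi hmn, val_div_gcd_aux p hp _ _ hNi1 hnn] at key
      set a := padicValNat p (N i)
      set b := padicValNat p (N (i+1))
      have hmin : min a μ = μ := min_eq_right hbigN.le
      rw [hmin] at key
      -- key : a - μ = b - min b ν
      have hbν : ν < b := by
        by_contra hc
        push_neg at hc
        rw [min_eq_left hc] at key
        omega
      rw [min_eq_right hbν.le] at key
      -- b = a - μ + ν
      have : (b : ℤ) = (a : ℤ) - μ + ν := by omega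
      rw [this, IH, hsum, he]; ring
    · -- ε = 0
      rw [hs0 he, IH, hsum, he]; ring
    · -- ε = 1
      have key := congrArg (padicValNat p) (hs1 he)
      rw [val_div_gcd_aux p hp _ _ hNi hnn, val_div_gcd_aux p hp _ _ hNi1 hmn] at key
      set a := padicValNat p (N i)
      set b := padicValNat p (N (i+1))
      have haν : ν < a := lt_trans hval hbigN
      rw [min_eq_right haν.le] at key
      have hbμ : μ < b := by
        by_contra hc
        push_neg at hc
        rw [min_eq_left hc] at key
        omega
      rw [min_eq_right hbμ.le] at key
      have : (b : ℤ) = (a : ℤ) - ν + μ := by omega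
      rw [this, IH, hsum, he]; ring
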